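/- Let X be an integrable real random variable with continuous and strictly increasing cumulative distribution function, and let p ∈ (0,1) satisfy VaR_p(X) > E[X] and ES_p(X) > VaR_p(X). Then θ_p := (1−p)(ES_p(X) − VaR_p(X))/(VaR_p(X) − E[X]) = E[(X − VaR_p(X))₊]/(VaR_p(X) − E[X]) is strictly positive, satisfies FES_p(X; θ_p) = VaR_p(X), and is the unique θ > 0 with this property: if θ, θ' > 0 and FES_p(X;θ) = FES_p(X;θ') = VaR_p(X), then θ = θ'. -/

import Mathlib

open MeasureTheory Set

/-- For an integrable random variable `X` with continuous, strictly
increasing CDF `F` (so `VaR u` is the unique `x` with `F x = u`), and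
`p ∈ (0,1)` with `VaR p > E[X]` and `ES p > VaR p`, the quantity
`θp = (1-p)(ES p - VaR p)/(VaR p - E[X])` is strictly positive, equals
`E[(X - VaR p)₊]/(VaR p - E[X])`, satisfies `FES_p(X; θp) = VaR p`, and is the
unique positive flexibility level with that property. -/
theorem theta_index_characterizes_pelvar
    {Ω : Type*} [MeasurableSpace Ω] (μ : Measure Ω) [IsProbabilityMeasure μ]
    (X : Ω → ℝ) (hX : Integrable X μ)
    (F : ℝ → ℝ) (hF : ∀ x, F x = (μ {ω | X ω ≤ x}).toReal)
    (hFc : Continuous F) (hFm : StrictMono F)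
    (VaR : ℝ → ℝ) (hVaR : ∀ u ∈ Set.Ioo (0:ℝ) 1, F (VaR u) = u)
    (ES : ℝ → ℝ) (hES : ∀ u ∈ Set.Ioo (0:ℝ) 1, ES u = (1 - u)⁻¹ * ∫ v in u..1, VaR v)
    (p : ℝ) (hp : p ∈ Set.Ioo (0:ℝ) 1)
    (hD : (∫ ω, X ω ∂μ) < VaR p) (hSV : VaR p < ES p)
    (θp : ℝ)
    (hθp : θp = (1 - p) * (ES p - VaR p) / (VaR p - ∫ ω, X ω ∂μ)) :
    0 < θp
    ∧ θp = (∫ ω, max (X ω - VaR p) 0 ∂μ) / (VaR p - ∫ ω, X ω ∂μ)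
    ∧ ((1 - p) * ES p + θp * ∫ ω, X ω ∂μ) / (1 - p + θp) = VaR p
    ∧ ∀ θ θ' : ℝ, 0 < θ → 0 < θ' →
        ((1 - p) * ES p + θ * ∫ ω, X ω ∂μ) / (1 - p + θ) = VaR p →
        ((1 - p) * ES p + θ' * ∫ ω, X ω ∂μ) / (1 - p + θ') = VaR p →
        θ = θ' := by
  obtain ⟨hp0, hp1⟩ := hp
  set q := VaR p with hq
  set m := (∫ ω, X ω ∂μ) with hm
  -- key equivalence : for v ∈ (0,1), x < VaR v ↔ F x < v
  have key : ∀ v ∈ Set.Ioo (0:ℝ) 1, ∀ x : ℝ, x < VaR v ↔ F x < v := by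
    intro v hv x
    conv_rhs => rw [← hVaR v hv]
    exact (hFm.lt_iff_lt).symm
  have hFq : F q = p := hVaR p ⟨hp0, hp1⟩
  -- monotonicity of VaR on (p,1) and lower bound VaR p ≤ VaR v
  have hVaR_lb : ∀ v ∈ Set.Ioo p 1, q ≤ VaR v := by
    intro v hv
    have hv' : v ∈ Set.Ioo (0:ℝ) 1 := ⟨hp0.trans hv.1, hv.2⟩
    have : F q ≤ F (VaR v) := by rw [hFq, hVaR v hv']; exact hv.1.le
    exact hFm.le_iff_le.mp this
  have hmono : MonotoneOn VaR (Set.Ioo p 1) := by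
    intro a ha b hb hab
    have ha' : a ∈ Set.Ioo (0:ℝ) 1 := ⟨hp0.trans ha.1, ha.2⟩
    have hb' : b ∈ Set.Ioo (0:ℝ) 1 := ⟨hp0.trans hb.1, hb.2⟩
    have : F (VaR a) ≤ F (VaR b) := by rw [hVaR a ha', hVaR b hb']; exact hab
    exact hFm.le_iff_le.mp this
  -- measurable representative of X
  obtain ⟨X', hX'm, hXX'⟩ := hX.aemeasurable
  have hμX' : ∀ x : ℝ, μ {ω | X ω ≤ x} = μ {ω | X' ω ≤ x} := by
    intro x
    exact measure_congr (hXX'.mono fun ω h => show (X ω ≤ x) = (X' ω ≤ x) by rw [h])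
  -- tail formula for X
  have tail : ∀ x : ℝ, μ {ω | x < X ω} = ENNReal.ofReal (1 - F x) := by
    intro x
    have h1 : μ {ω | x < X ω} = μ {ω | x < X' ω} :=
      measure_congr (hXX'.mono fun ω h => show (x < X ω) = (x < X' ω) by rw [h])
    have h2 : {ω | x < X' ω} = {ω | X' ω ≤ x}ᶜ := by
      ext ω; simp [not_le]
    have hms : MeasurableSet {ω | X' ω ≤ x} := hX'm measurableSet_Iic
    have hle1 : μ {ω | X' ω ≤ x} ≤ 1 := prob_le_one
    rw [h1, h2, measure_compl hms (measure_ne_top μ _), measure_univ, hF, hμX' x]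
    rw [ENNReal.ofReal_sub _ ENNReal.toReal_nonneg, ENNReal.ofReal_one,
      ENNReal.ofReal_toReal (measure_ne_top μ _)]
  -- the nonnegative part function
  set f : Ω → ℝ := fun ω => max (X ω - q) 0 with hfdef
  have f_nn : 0 ≤ᵐ[μ] f := Filter.Eventually.of_forall fun ω => le_max_right _ _
  have f_mble : AEMeasurable f μ := (hX.aemeasurable.sub aemeasurable_const).max aemeasurable_const
  have f_int : Integrable f μ := (hX.sub (integrable_const q)).pos_part
  have tail_f : ∀ t ∈ Set.Ioi (0:ℝ), μ {ω | t < f ω} = ENNReal.ofReal (1 - F (q + t)) := by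
    intro t ht
    have hset : {ω | t < f ω} = {ω | q + t < X ω} := by
      ext ω
      simp only [Set.mem_setOf_eq, hfdef, lt_max_iff]
      constructor
      · rintro (h | h)
        · linarith
        · exact absurd ht (by simpa using not_lt.mpr h.le)
      · intro h; left; linarith
    rw [hset, tail]
  -- the quantile shift function on (p,1)
  set w : ℝ → ℝ := fun v => VaR v - q with hwdef
  have w_mble : AEMeasurable w (volume.restrict (Set.Ioo p 1)) :=
    (aemeasurable_restrict_of_monotoneOn measurableSet_Ioo hmono).sub aemeasurable_const
  have w_nn : 0 ≤ᵐ[volume.restrict (Set.Ioo p 1)] w :=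
    (ae_restrict_iff' measurableSet_Ioo).2
      (Filter.Eventually.of_forall fun v hv => sub_nonneg.2 (hVaR_lb v hv))
  have tail_w : ∀ t ∈ Set.Ioi (0:ℝ),
      (volume.restrict (Set.Ioo p 1)) {v | t < w v} = ENNReal.ofReal (1 - F (q + t)) := by
    intro t ht
    have ht' : (0:ℝ) < t := ht
    rw [Measure.restrict_apply' measurableSet_Ioo]
    have hFqt : p < F (q + t) := by
      rw [← hFq]; exact hFm (by linarith)
    have hset : {v | t < w v} ∩ Set.Ioo p 1 = Set.Ioo (F (q + t)) 1 := by
      ext v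
      constructor
      · rintro ⟨hv1, hv2⟩
        have hv' : v ∈ Set.Ioo (0:ℝ) 1 := ⟨hp0.trans hv2.1, hv2.2⟩
        have : q + t < VaR v := by
          have : t < VaR v - q := hv1
          linarith
        exact ⟨(key v hv' (q + t)).mp this, hv2.2⟩
      · rintro ⟨h1, h2⟩
        have hpv : p < v := hFqt.trans h1
        have hv' : v ∈ Set.Ioo (0:ℝ) 1 := ⟨hp0.trans hpv, h2⟩
        have : q + t < VaR v := (key v hv' (q + t)).mpr h1
        exact ⟨show t < w v by simp only [hwdef]; linarith, hpv, h2⟩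
    rw [hset, Real.volume_Ioo]
  -- layer cake on both sides
  have L1 := lintegral_eq_lintegral_meas_lt μ f_nn f_mble
  have L2 := lintegral_eq_lintegral_meas_lt (volume.restrict (Set.Ioo p 1)) w_nn w_mble
  have Leq : ∫⁻ ω, ENNReal.ofReal (f ω) ∂μ
      = ∫⁻ v in Set.Ioo p 1, ENNReal.ofReal (w v) := by
    rw [L1, L2]
    refine setLIntegral_congr_fun measurableSet_Ioi (fun t ht => ?_)
    rw [tail_f t ht, tail_w t ht]
  have Lfin : ∫⁻ ω, ENNReal.ofReal (f ω) ∂μ < ⊤ := f_int.lintegral_lt_top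
  have w_int : Integrable w (volume.restrict (Set.Ioo p 1)) := by
    refine ⟨w_mble.aestronglyMeasurable, ?_⟩
    rw [hasFiniteIntegral_iff_ofReal w_nn, ← Leq]
    exact Lfin
  -- equality of real integrals
  have int_eq : ∫ ω, f ω ∂μ = ∫ v in Set.Ioo p 1, w v := by
    rw [integral_eq_lintegral_of_nonneg_ae f_nn f_int.aestronglyMeasurable,
      integral_eq_lintegral_of_nonneg_ae w_nn w_int.aestronglyMeasurable, Leq]
  -- compute the interval integral of VaR
  have VaR_eq : (fun v => VaR v) = fun v => w v + q := by
    funext v; simp [hwdef]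
  have VaR_int : IntegrableOn VaR (Set.Ioo p 1) := by
    rw [IntegrableOn, show VaR = fun v => w v + q from VaR_eq]
    exact w_int.add (integrable_const q)
  have hIoo : ∫ v in p..1, VaR v = ∫ v in Set.Ioo p 1, VaR v := by
    rw [intervalIntegral.integral_of_le hp1.le, integral_Ioc_eq_integral_Ioo]
  have hvol : (volume (Set.Ioo p 1)).toReal = 1 - p := by
    rw [Real.volume_Ioo, ENNReal.toReal_ofReal (by linarith)]
  have hsplit : ∫ v in Set.Ioo p 1, VaR v = (∫ v in Set.Ioo p 1, w v) + q * (1 - p) := by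
    conv_lhs => rw [show VaR = fun v => w v + q from VaR_eq]
    rw [integral_add w_int (integrable_const q), setIntegral_const, measureReal_def, hvol, smul_eq_mul]
    ring
  -- the key identity
  have hE : (1 - p) * (ES p - q) = ∫ ω, f ω ∂μ := by
    rw [hES p ⟨hp0, hp1⟩, hIoo, hsplit, int_eq]
    have h1p : (1:ℝ) - p ≠ 0 := by linarith
    field_simp
    ring
  -- now the four conclusions
  have hqm : 0 < q - m := sub_pos.2 hD
  have hden : q - m ≠ 0 := ne_of_gt hqm
  have hnum : 0 < (1 - p) * (ES p - q) := mul_pos (by linarith) (by linarith)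
  have hθpos : 0 < θp := by rw [hθp]; exact div_pos hnum hqm
  refine ⟨hθpos, ?_, ?_, ?_⟩
  · rw [hθp, ← hE]
  · have h1pθ : (0:ℝ) < 1 - p + θp := by linarith
    have hθmul : θp * (q - m) = (1 - p) * (ES p - q) := by
      rw [hθp]; field_simp
    rw [div_eq_iff (ne_of_gt h1pθ)]
    linear_combination -hθmul
  · intro θ θ' hθ hθ' h h'
    have e1 : (1 - p) * ES p + θ * m = q * (1 - p + θ) :=
      (div_eq_iff (ne_of_gt (by linarith : (0:ℝ) < 1 - p + θ))).mp h
    have e1' : (1 - p) * ES p + θ' * m = q * (1 - p + θ') :=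
      (div_eq_iff (ne_of_gt (by linarith : (0:ℝ) < 1 - p + θ'))).mp h'
    have eθ : θ * (q - m) = (1 - p) * (ES p - q) := by linear_combination -e1
    have eθ' : θ' * (q - m) = (1 - p) * (ES p - q) := by linear_combination -e1'
    exact mul_right_cancel₀ hden (eθ.trans eθ'.symm)
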